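/- Let A1, A2 be invertible n×n real matrices, let A3, A4, B1, B2 be n×n real matrices, and let 𝒳, 𝒴, 𝒲x, 𝒲y, ℳ be subsets of ℝⁿ. Suppose x ∈ 𝒳, y ∈ 𝒴, wx ∈ 𝒲x, wy ∈ 𝒲y, and A1·x + A2·y + B1·wx ∈ ℳ. Define 𝓜x = A1⁻¹ℳ ⊕ (−A1⁻¹A2)𝒴 ⊕ (−A1⁻¹B1)𝒲x, 𝓜y = A2⁻¹ℳ ⊕ (−A2⁻¹A1)𝒳 ⊕ (−A2⁻¹B1)𝒲x, 𝒳' = 𝓜x ∩ 𝒳, 𝒴' = 𝓜y ∩ 𝒴, and 𝒴post = A3𝒳' ⊕ A4𝒴' ⊕ B2𝒲y. Then x ∈ 𝒳', y ∈ 𝒴', and A3·x + A4·y + B2·wy ∈ 𝒴post. -/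
import Mathlib


open Matrix Set Pointwise

/-- Soundness of the one-step inference attack (Proposition 1, first part):
if the observation set contains the true public state, the calibrated sets
contain the true previous states, and the posterior private-state set contains
the true next private state. -/
theorem inference_attack_sound {n : ℕ}
    (A1 A2 A3 A4 B1 B2 : Matrix (Fin n) (Fin n) ℝ)
    (hA1 : IsUnit A1.det) (hA2 : IsUnit A2.det)
    (X Y Wx Wy M : Set (Fin n → ℝ))
    (x y wx wy : Fin n → ℝ)
    (hx : x ∈ X) (hy : y ∈ Y) (hwx : wx ∈ Wx) (hwy : wy ∈ Wy)
    (hM : A1.mulVec x + A2.mulVec y + B1.mulVec wx ∈ M)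
    (Mx My X' Y' Ypost : Set (Fin n → ℝ))
    (hMx : Mx = A1⁻¹.mulVec '' M + (-(A1⁻¹ * A2)).mulVec '' Y
            + (-(A1⁻¹ * B1)).mulVec '' Wx)
    (hMy : My = A2⁻¹.mulVec '' M + (-(A2⁻¹ * A1)).mulVec '' X
            + (-(A2⁻¹ * B1)).mulVec '' Wx)
    (hX' : X' = Mx ∩ X) (hY' : Y' = My ∩ Y)
    (hYpost : Ypost = A3.mulVec '' X' + A4.mulVec '' Y' + B2.mulVec '' Wy) :
    x ∈ X' ∧ y ∈ Y' ∧ A3.mulVec x + A4.mulVec y + B2.mulVec wy ∈ Ypost := by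
  set m := A1.mulVec x + A2.mulVec y + B1.mulVec wx with hm
  have hxMx : x ∈ Mx := by
    rw [hMx]
    have : x = A1⁻¹.mulVec m + (-(A1⁻¹ * A2)).mulVec y + (-(A1⁻¹ * B1)).mulVec wx := by
      simp only [hm, Matrix.mulVec_add, Matrix.mulVec_mulVec, Matrix.neg_mulVec,
        Matrix.nonsing_inv_mul A1 hA1, Matrix.one_mulVec]
      abel
    rw [this]
    exact Set.add_mem_add (Set.add_mem_add (Set.mem_image_of_mem _ hM)
      (Set.mem_image_of_mem _ hy)) (Set.mem_image_of_mem _ hwx)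
  have hyMy : y ∈ My := by
    rw [hMy]
    have : y = A2⁻¹.mulVec m + (-(A2⁻¹ * A1)).mulVec x + (-(A2⁻¹ * B1)).mulVec wx := by
      simp only [hm, Matrix.mulVec_add, Matrix.mulVec_mulVec, Matrix.neg_mulVec,
        Matrix.nonsing_inv_mul A2 hA2, Matrix.one_mulVec]
      abel
    rw [this]
    exact Set.add_mem_add (Set.add_mem_add (Set.mem_image_of_mem _ hM)
      (Set.mem_image_of_mem _ hx)) (Set.mem_image_of_mem _ hwx)
  have hxX' : x ∈ X' := by rw [hX']; exact ⟨hxMx, hx⟩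
  have hyY' : y ∈ Y' := by rw [hY']; exact ⟨hyMy, hy⟩
  refine ⟨hxX', hyY', ?_⟩
  rw [hYpost]
  exact Set.add_mem_add (Set.add_mem_add (Set.mem_image_of_mem _ hxX')
    (Set.mem_image_of_mem _ hyY')) (Set.mem_image_of_mem _ hwy)
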